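/- Let G = C ≀ ℤ with C nontrivial cyclic, generating set S = {a, t} (a generating the copy C₀, t generating ℤ), and let A be the base of G. Then |B_S(n) ∩ A| ≤ (n+1) · |B_S(n) ∩ A₀|, where A₀ = {g ∈ A : g = 1 or min(support g) ≥ 0}. -/

import Mathlib

open Function

variable (H : Type*) [Group H]

/-- The base of the restricted wreath product `H ≀ ℤ`: finitely supported functions `ℤ → H`. -/
def RWBase : Subgroup (ℤ → H) where
  carrier := {f | (mulSupport f).Finite}
  one_mem' := by simp [mulSupport_one]
  mul_mem' := fun hf hg => ((hf.union hg).subset (mulSupport_mul _ _))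
  inv_mem' := fun hf => by simpa [mulSupport_inv] using hf

/-- The shift automorphism of the base. -/
def shiftAut (k : ℤ) : MulAut (RWBase H) where
  toFun f := ⟨fun i => (f : ℤ → H) (i - k), by
    have h : (mulSupport fun i => (f : ℤ → H) (i - k)) =
        (fun i : ℤ => i - k) ⁻¹' mulSupport (f : ℤ → H) := rfl
    show (mulSupport fun i => (f : ℤ → H) (i - k)).Finite
    rw [h]
    exact f.2.preimage (Function.Injective.injOn (f := fun i : ℤ => i - k) fun a b hab => by simpa using hab)⟩
  invFun f := ⟨fun i => (f : ℤ → H) (i + k), by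
    have h : (mulSupport fun i => (f : ℤ → H) (i + k)) =
        (fun i : ℤ => i + k) ⁻¹' mulSupport (f : ℤ → H) := rfl
    show (mulSupport fun i => (f : ℤ → H) (i + k)).Finite
    rw [h]
    exact f.2.preimage (Function.Injective.injOn (f := fun i : ℤ => i + k) fun a b hab => by simpa using hab)⟩
  left_inv f := Subtype.ext (funext fun i => by simp)
  right_inv f := Subtype.ext (funext fun i => by simp)
  map_mul' f g := rfl

/-- The action of `ℤ` on the base by shifting. -/
def shiftHom : Multiplicative ℤ →* MulAut (RWBase H) where
  toFun k := shiftAut H (Multiplicative.toAdd k)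
  map_one' := MulEquiv.ext fun f => Subtype.ext (funext fun i => by simp [shiftAut])
  map_mul' k l := MulEquiv.ext fun f => Subtype.ext (funext fun i => by
    simp [shiftAut, sub_sub])

/-- The restricted wreath product `H ≀ ℤ`. -/
abbrev WreathZ := RWBase H ⋊[shiftHom H] Multiplicative ℤ

/-- The base subgroup `A` of `H ≀ ℤ`. -/
def wreathBase : Subgroup (WreathZ H) := (SemidirectProduct.inl (φ := shiftHom H)).range

/-- The generator `t` of the head `ℤ`. -/
def tGen : WreathZ H := SemidirectProduct.inr (Multiplicative.ofAdd 1)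

/-- The element of the base supported at `0` with value `h`. -/
def single0 (h : H) : RWBase H :=
  ⟨fun i => if i = 0 then h else 1, by
    refine Set.Finite.subset (Set.finite_singleton (0 : ℤ)) fun i hi => ?_
    rw [mem_mulSupport] at hi
    by_contra h0
    exact hi (if_neg h0)⟩

/-- The inclusion of `H` as the copy at coordinate `0`. -/
def incl0 (h : H) : WreathZ H := SemidirectProduct.inl (single0 H h)

/-- The word length of `g` with respect to the generating set `S`:
the least length of a word in `S ∪ S⁻¹` representing `g`. -/
noncomputable def wordLength {G : Type*} [Group G] (S : Set G) (g : G) : ℕ :=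
  sInf {n | ∃ l : List G, (∀ x ∈ l, x ∈ S ∨ x⁻¹ ∈ S) ∧ l.prod = g ∧ l.length = n}

/-- The ball of radius `n` in the Cayley graph of `G` with respect to `S`. -/
def ball {G : Type*} [Group G] (S : Set G) (n : ℕ) : Set G :=
  {g | wordLength S g ≤ n}

/-- The translation length `τ_S(g) = limsup_n |g^n|_S / n`. -/
noncomputable def translationLength {G : Type*} [Group G] (S : Set G) (g : G) : ℝ :=
  Filter.limsup (fun n : ℕ => (wordLength S (g ^ n) : ℝ) / n) Filter.atTop

/-- The set of base elements whose support is contained in the non-negative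
integers (together with the identity). -/
def basePos (H : Type*) [Group H] : Set (WreathZ H) :=
  {g | g.right = 1 ∧ ∀ i : ℤ, i < 0 → (g.left : ℤ → H) i = 1}

section LamplighterAux

open Multiplicative SemidirectProduct

variable {C : Type*} [Group C]

private lemma coeRW_mul (f g : RWBase C) (i : ℤ) :
    ((f * g : RWBase C) : ℤ → C) i = (f : ℤ → C) i * (g : ℤ → C) i := rfl

private lemma coeRW_one (i : ℤ) : ((1 : RWBase C) : ℤ → C) i = 1 := rfl

private lemma coeRW_inv (f : RWBase C) (i : ℤ) :
    ((f⁻¹ : RWBase C) : ℤ → C) i = ((f : ℤ → C) i)⁻¹ := rfl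

private lemma shiftHom_apply' (r : Multiplicative ℤ) (f : RWBase C) (i : ℤ) :
    ((shiftHom C r f : RWBase C) : ℤ → C) i = (f : ℤ → C) (i - Multiplicative.toAdd r) := rfl

private lemma single0_apply (h : C) (i : ℤ) :
    ((single0 C h : RWBase C) : ℤ → C) i = if i = 0 then h else 1 := rfl

private lemma base_comm [IsCyclic C] (f g : RWBase C) : f * g = g * f := by
  obtain ⟨c0, hc0⟩ := IsCyclic.exists_generator (α := C)
  have hcomm : ∀ x y : C, x * y = y * x := by
    intro x y
    obtain ⟨m, rfl⟩ := hc0 x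
    obtain ⟨k, rfl⟩ := hc0 y
    rw [← zpow_add, ← zpow_add, add_comm]
  exact Subtype.ext (funext fun i => hcomm _ _)

private lemma eq_inl_of_right_eq_one (g : WreathZ C) (hg : g.right = 1) :
    g = inl g.left := by
  ext
  · rfl
  · exact hg.trans rfl

/-- Conjugating a base element by a group element only shifts it. -/
private lemma conj_base [IsCyclic C] (u g : WreathZ C) (hg : g.right = 1) :
    u⁻¹ * g * u = inl ((shiftHom C u.right⁻¹) g.left) := by
  have h2 : (inl u.left : WreathZ C)⁻¹ * inl g.left * inl u.left = inl g.left := by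
    rw [← map_inv, ← map_mul, ← map_mul, mul_assoc, base_comm g.left u.left,
      inv_mul_cancel_left]
  have h1 : u⁻¹ * g * u = (inr u.right)⁻¹ *
      ((inl u.left : WreathZ C)⁻¹ * inl g.left * inl u.left) * inr u.right := by
    conv_lhs => rw [eq_inl_of_right_eq_one g hg, ← inl_left_mul_inr_right u]
    group
  rw [h1, h2, ← map_inv, ← inl_aut_inv, map_inv]

private lemma conj_inr [IsCyclic C] (g : WreathZ C) (hg : g.right = 1) (z : ℤ) :
    (inr (ofAdd z) : WreathZ C) * g * (inr (ofAdd z))⁻¹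
      = inl ((shiftHom C (ofAdd z)) g.left) := by
  conv_lhs => rw [eq_inl_of_right_eq_one g hg]
  rw [inl_aut, map_inv]

/-- The possible letters. -/
private def IsLetter (c : C) (x : WreathZ C) : Prop :=
  x = incl0 C c ∨ x = (incl0 C c)⁻¹ ∨ x = tGen C ∨ x = (tGen C)⁻¹

private lemma isLetter_of_mem {c : C} {x : WreathZ C}
    (hx : x ∈ ({incl0 C c, tGen C} : Set (WreathZ C))
      ∨ x⁻¹ ∈ ({incl0 C c, tGen C} : Set (WreathZ C))) : IsLetter c x := by
  rcases hx with (h | h) <;> rcases h with (h | h)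
  · exact Or.inl h
  · exact Or.inr (Or.inr (Or.inl h))
  · exact Or.inr (Or.inl (by rw [← inv_inv x, h]))
  · exact Or.inr (Or.inr (Or.inr (by rw [← inv_inv x, h])))

private lemma letter_right {c : C} {x : WreathZ C} (hx : IsLetter c x) :
    |Multiplicative.toAdd x.right| ≤ 1 := by
  rcases hx with h | h | h | h <;> subst h <;>
    simp [incl0, tGen]

private lemma letter_left {c : C} {x : WreathZ C} (hx : IsLetter c x) :
    ∀ j : ℤ, j ≠ 0 → ((x.left : RWBase C) : ℤ → C) j = 1 := by
  intro j hj
  rcases hx with h | h | h | h <;> subst h <;>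
    simp [incl0, tGen, coeRW_inv, coeRW_one, shiftHom_apply', single0_apply, hj]

private lemma walk_bound {c : C} :
    ∀ (l : List (WreathZ C)), (∀ x ∈ l, IsLetter c x) →
      |Multiplicative.toAdd (l.prod).right| ≤ (l.length : ℤ) := by
  intro l
  induction l with
  | nil => intro _; simp
  | cons x l ih =>
    intro hl
    have hx := letter_right (hl x (List.mem_cons_self (a := x) (l := l)))
    have hrest := ih (fun y hy => hl y (List.mem_cons_of_mem x hy))
    calc |Multiplicative.toAdd ((x :: l).prod).right|
        = |Multiplicative.toAdd x.right + Multiplicative.toAdd (l.prod).right| := by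
          rw [List.prod_cons, mul_right, toAdd_mul]
      _ ≤ |Multiplicative.toAdd x.right| + |Multiplicative.toAdd (l.prod).right| :=
          abs_add_le _ _
      _ ≤ 1 + l.length := add_le_add hx hrest
      _ = ((x :: l).length : ℤ) := by simp [add_comm]

private lemma walk_support {c : C} :
    ∀ (l : List (WreathZ C)), (∀ x ∈ l, IsLetter c x) → ∀ j : ℤ,
      ((l.prod.left : RWBase C) : ℤ → C) j ≠ 1 →
      ∃ i, i ≤ l.length ∧ Multiplicative.toAdd ((l.take i).prod).right = j := by
  intro l
  induction l with
  | nil =>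
    intro _ j hj
    exact absurd rfl hj
  | cons x l ih =>
    intro hl j hj
    rw [List.prod_cons, mul_left, coeRW_mul, shiftHom_apply'] at hj
    by_cases hx1 : ((x.left : RWBase C) : ℤ → C) j = 1
    · rw [hx1, one_mul] at hj
      obtain ⟨i, hi, hival⟩ :=
        ih (fun y hy => hl y (List.mem_cons_of_mem x hy)) _ hj
      refine ⟨i + 1, by simpa using Nat.succ_le_succ hi, ?_⟩
      rw [List.take_succ_cons, List.prod_cons, mul_right, toAdd_mul, hival]
      ring
    · have hj0 : j = 0 := by
        by_contra h0
        exact hx1 (letter_left (hl x (List.mem_cons_self (a := x) (l := l))) j h0)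
      exact ⟨0, Nat.zero_le _, by simp [hj0]⟩

private lemma gen_top (c : C) (hc : Subgroup.zpowers c = ⊤) :
    Subgroup.closure ({incl0 C c, tGen C} : Set (WreathZ C)) = ⊤ := by
  rw [eq_top_iff]
  intro g _
  set K := Subgroup.closure ({incl0 C c, tGen C} : Set (WreathZ C)) with hK
  have ht : tGen C ∈ K := Subgroup.subset_closure (Or.inr rfl)
  have ha : (inl (single0 C c) : WreathZ C) ∈ K := Subgroup.subset_closure (Or.inl rfl)
  have hinr : ∀ z : ℤ, (inr (ofAdd z) : WreathZ C) ∈ K := by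
    intro z
    have h1 : (inr (ofAdd z) : WreathZ C) = (tGen C) ^ z := by
      rw [tGen, ← map_zpow]
      congr 1
      rw [← ofAdd_zsmul]
      norm_num
    rw [h1]
    exact Subgroup.zpow_mem K ht z
  have hsingle0 : ∀ x : C, (inl (single0 C x) : WreathZ C) ∈ K := by
    intro x
    obtain ⟨j, rfl⟩ : ∃ j : ℤ, c ^ j = x := by
      have hx : x ∈ Subgroup.zpowers c := hc ▸ Subgroup.mem_top x
      exact hx
    have hxx : single0 C (c ^ j) = (single0 C c) ^ j := by
      apply Subtype.ext
      funext i
      have : (((single0 C c) ^ j : RWBase C) : ℤ → C) i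
          = (((single0 C c) : ℤ → C) i) ^ j := by
        rw [SubgroupClass.coe_zpow]
        rfl
      rw [this, single0_apply, single0_apply]
      by_cases h : i = 0 <;> simp [h]
    rw [hxx, map_zpow]
    exact Subgroup.zpow_mem K ha j
  have hsingle : ∀ (z : ℤ) (x : C),
      (inl ((shiftHom C (ofAdd z)) (single0 C x)) : WreathZ C) ∈ K := by
    intro z x
    rw [inl_aut, map_inv]
    exact mul_mem (mul_mem (hinr z) (hsingle0 x)) (inv_mem (hinr z))
  have hbase : ∀ (s : Finset ℤ) (b : RWBase C),
      (∀ i : ℤ, i ∉ s → (b : ℤ → C) i = 1) → (inl b : WreathZ C) ∈ K := by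
    intro s
    induction s using Finset.induction_on with
    | empty =>
      intro b hb
      have hb1 : b = 1 := Subtype.ext (funext fun i => hb i (by simp))
      rw [hb1, map_one]
      exact one_mem K
    | @insert a s ha' ih =>
      intro b hb
      set sgl : RWBase C := (shiftHom C (ofAdd a)) (single0 C ((b : ℤ → C) a)) with hsgl
      have hb' : ∀ i : ℤ, i ∉ s → ((sgl⁻¹ * b : RWBase C) : ℤ → C) i = 1 := by
        intro i hi
        rw [coeRW_mul, coeRW_inv, hsgl, shiftHom_apply', toAdd_ofAdd, single0_apply]
        by_cases h : i = a
        · subst h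
          simp
        · rw [if_neg (fun hh => h (by omega)), inv_one, one_mul]
          exact hb i (by simp [h, hi])
      have hmem := ih (sgl⁻¹ * b) hb'
      have : (inl b : WreathZ C) = inl sgl * inl (sgl⁻¹ * b) := by
        rw [← map_mul, mul_inv_cancel_left]
      rw [this]
      exact mul_mem (hsingle a ((b : ℤ → C) a)) hmem
  have hgleft : (inl g.left : WreathZ C) ∈ K := by
    refine hbase g.left.2.toFinset g.left (fun i hi => ?_)
    by_contra h
    exact hi (g.left.2.mem_toFinset.2 h)
  have hgright : (inr g.right : WreathZ C) ∈ K := by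
    have : g.right = ofAdd (Multiplicative.toAdd g.right) := rfl
    rw [this]
    exact hinr _
  rw [← inl_left_mul_inr_right g]
  exact mul_mem hgleft hgright

private lemma exists_word (c : C) (hc : Subgroup.zpowers c = ⊤) (g : WreathZ C) :
    ∃ l : List (WreathZ C), (∀ x ∈ l, IsLetter c x) ∧ l.prod = g := by
  have hg : g ∈ Submonoid.closure (({incl0 C c, tGen C} : Set (WreathZ C)) ∪
      ({incl0 C c, tGen C} : Set (WreathZ C))⁻¹) := by
    rw [← Subgroup.closure_toSubmonoid, gen_top c hc]
    trivial
  obtain ⟨l, hl, hprod⟩ := Submonoid.exists_list_of_mem_closure hg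
  refine ⟨l, fun x hx => ?_, hprod⟩
  rcases hl x hx with h | h
  · exact isLetter_of_mem (Or.inl h)
  · exact isLetter_of_mem (Or.inr (Set.mem_inv.1 h))

/-- The key surgery lemma: a base element of the ball can be shifted into `basePos`
by a conjugation by `t^k`, `0 ≤ k ≤ n`, staying in the ball. -/
private lemma key_shift [IsCyclic C] (c : C) (hc : Subgroup.zpowers c = ⊤) (n : ℕ)
    (g : WreathZ C) (hg : g ∈ ball ({incl0 C c, tGen C} : Set (WreathZ C)) n)
    (hA : g.right = 1) :
    ∃ k : ℕ, k ≤ n ∧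
      (inr (ofAdd (k : ℤ)) : WreathZ C) * g * (inr (ofAdd (k : ℤ)))⁻¹ ∈
        ball ({incl0 C c, tGen C} : Set (WreathZ C)) n ∩ basePos C := by
  classical
  -- get a geodesic word for g
  have hne : {m | ∃ l : List (WreathZ C),
      (∀ x ∈ l, x ∈ ({incl0 C c, tGen C} : Set (WreathZ C)) ∨
        x⁻¹ ∈ ({incl0 C c, tGen C} : Set (WreathZ C))) ∧ l.prod = g ∧ l.length = m}.Nonempty := by
    obtain ⟨l, hl, hprod⟩ := exists_word c hc g
    refine ⟨l.length, l, fun x hx => ?_, hprod, rfl⟩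
    rcases hl x hx with h | h | h | h
    · exact Or.inl (h ▸ Or.inl rfl)
    · exact Or.inr (by rw [h, inv_inv]; exact Or.inl rfl)
    · exact Or.inl (h ▸ Or.inr rfl)
    · exact Or.inr (by rw [h, inv_inv]; exact Or.inr rfl)
  obtain ⟨l, hl, hprod, hlen⟩ := Nat.sInf_mem hne
  have hlettes : ∀ x ∈ l, IsLetter c x := fun x hx => isLetter_of_mem (hl x hx)
  have hlenn : l.length ≤ n := by
    rw [hlen]
    exact hg
  -- the walk and its minimum
  set F : ℕ → ℤ := fun i => Multiplicative.toAdd ((l.take i).prod).right with hF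
  have hrange : (Finset.range (l.length + 1)).Nonempty := ⟨0, by simp⟩
  obtain ⟨i₀, hi₀mem, hi₀⟩ := Finset.exists_mem_eq_inf' hrange F
  set m : ℤ := F i₀ with hm
  have hmin : ∀ j, j ≤ l.length → m ≤ F j := by
    intro j hj
    rw [← hi₀]
    exact Finset.inf'_le F (Finset.mem_range.2 (Nat.lt_succ_of_le hj))
  have hm0 : m ≤ 0 := by
    have := hmin 0 (Nat.zero_le _)
    simpa [hF] using this
  have hmbound : -(n : ℤ) ≤ m := by
    have h1 : |F i₀| ≤ ((l.take i₀).length : ℤ) :=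
      walk_bound (l.take i₀) (fun x hx => hlettes x (List.mem_of_mem_take hx))
    have h2 : ((l.take i₀).length : ℤ) ≤ n := by
      have h3 : (l.take i₀).length ≤ l.length := by
        rw [List.length_take]
        exact min_le_right _ _
      exact_mod_cast le_trans h3 hlenn
    have h4 := neg_abs_le (F i₀)
    have hmF : m = F i₀ := hm
    linarith
  have hkZ : (((-m).toNat : ℤ)) = -m := Int.toNat_of_nonneg (by linarith)
  set u : List (WreathZ C) := l.take i₀ with hu
  set v : List (WreathZ C) := l.drop i₀ with hv
  have huv : u.prod * v.prod = g := by
    rw [← List.prod_append, hu, hv, List.take_append_drop, hprod]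
  have hvu : u.prod⁻¹ * g = v.prod := by rw [← huv, inv_mul_cancel_left]
  have hur : u.prod.right = ofAdd m := by
    rw [hm, hF]
    exact (ofAdd_toAdd _).symm
  have hright : (ofAdd (((-m).toNat : ℤ))) = (u.prod).right⁻¹ := by
    rw [hkZ, hur, ofAdd_neg]
  have hconj : (inr (ofAdd (((-m).toNat : ℤ))) : WreathZ C) * g *
      (inr (ofAdd (((-m).toNat : ℤ))))⁻¹ = v.prod * u.prod := by
    rw [conj_inr g hA, hright, ← conj_base u.prod g hA, ← hvu, mul_assoc]
  refine ⟨(-m).toNat, ?_, ?_, ?_, ?_⟩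
  · -- k ≤ n
    rw [← Nat.cast_le (α := ℤ), hkZ]
    linarith
  · -- ball membership
    show wordLength _ _ ≤ n
    refine le_trans (Nat.sInf_le ⟨v ++ u, ?_, by rw [List.prod_append, hconj], rfl⟩) ?_
    · intro x hx
      rcases List.mem_append.1 hx with h | h
      · exact hl x (List.mem_of_mem_drop h)
      · exact hl x (List.mem_of_mem_take h)
    · have : (v ++ u).length = l.length := by
        rw [List.length_append, hu, hv, Nat.add_comm, ← List.length_append,
          List.take_append_drop]
      rw [this]
      exact hlenn
  · -- right component is 1
    simp only [mul_right, inv_right, right_inr, hA, mul_one, mul_inv_cancel]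
  · -- support is nonnegative
    intro i hi
    rw [conj_inr g hA]
    rw [left_inl, shiftHom_apply', toAdd_ofAdd, hkZ, sub_neg_eq_add]
    by_contra hne
    have hgl : ((l.prod.left : RWBase C) : ℤ → C) (i + m) ≠ 1 := by
      rw [hprod]; exact hne
    obtain ⟨i', hi', hival⟩ := walk_support l hlettes (i + m) hgl
    have h5 : F i' = i + m := hival
    have h6 := hmin i' hi'
    linarith

end LamplighterAux

/-- For `G = C ≀ ℤ` with `C` a nontrivial cyclic group and `S = {a, t}` (`a` a
generator of the copy `C₀`, `t` a generator of the head `ℤ`), we have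
`|B_S(n) ∩ A| ≤ (n+1) · |B_S(n) ∩ A₀|`, where `A` is the base and `A₀` consists
of the base elements with support in the non-negative integers. -/
theorem lamplighter_base_card_le {C : Type*} [Group C] [IsCyclic C] [Nontrivial C]
    (c : C) (hc : Subgroup.zpowers c = ⊤)
    (S : Set (WreathZ C)) (hS : S = {incl0 C c, tGen C}) (n : ℕ) :
    Nat.card (ball S n ∩ (wreathBase C : Set (WreathZ C)) : Set (WreathZ C)) ≤
      (n + 1) * Nat.card (ball S n ∩ basePos C : Set (WreathZ C)) := by
  classical
  subst hS
  by_cases hfin : (ball ({incl0 C c, tGen C} : Set (WreathZ C)) n ∩ basePos C).Finite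
  · haveI := hfin.to_subtype
    have hchoice : ∀ g : ↥(ball ({incl0 C c, tGen C} : Set (WreathZ C)) n ∩
        (wreathBase C : Set (WreathZ C))),
        ∃ p : Fin (n + 1) × ↥(ball ({incl0 C c, tGen C} : Set (WreathZ C)) n ∩ basePos C),
          (SemidirectProduct.inr (Multiplicative.ofAdd ((p.1 : ℕ) : ℤ)) : WreathZ C) *
            (g : WreathZ C) *
            (SemidirectProduct.inr (Multiplicative.ofAdd ((p.1 : ℕ) : ℤ)))⁻¹ =
            (p.2 : WreathZ C) := by
      intro g
      have hright1 : (g : WreathZ C).right = 1 := by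
        obtain ⟨x, hx⟩ := g.2.2
        rw [← hx]
        simp
      obtain ⟨k, hk, hmem⟩ := key_shift c hc n (g : WreathZ C) g.2.1 hright1
      exact ⟨⟨⟨k, Nat.lt_succ_of_le hk⟩, ⟨_, hmem⟩⟩, rfl⟩
    choose f hf using hchoice
    have hinj : Function.Injective f := by
      intro g₁ g₂ heq
      have h1 := hf g₁
      have h2 := hf g₂
      rw [heq] at h1
      have h3 := h1.trans h2.symm
      exact Subtype.ext (mul_left_cancel (mul_right_cancel h3))
    calc Nat.card (ball ({incl0 C c, tGen C} : Set (WreathZ C)) n ∩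
          (wreathBase C : Set (WreathZ C)) : Set (WreathZ C))
        ≤ Nat.card (Fin (n + 1) × ↥(ball ({incl0 C c, tGen C} : Set (WreathZ C)) n ∩
            basePos C)) := Nat.card_le_card_of_injective f hinj
      _ = (n + 1) * Nat.card (ball ({incl0 C c, tGen C} : Set (WreathZ C)) n ∩
            basePos C : Set (WreathZ C)) := by
          rw [Nat.card_prod]
          congr 1
          simp
  · have hsub : (ball ({incl0 C c, tGen C} : Set (WreathZ C)) n ∩ basePos C) ⊆
        (ball ({incl0 C c, tGen C} : Set (WreathZ C)) n ∩
          (wreathBase C : Set (WreathZ C))) := by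
      intro g hg
      exact ⟨hg.1, ⟨g.left, (eq_inl_of_right_eq_one g hg.2.1).symm⟩⟩
    have hInf : (ball ({incl0 C c, tGen C} : Set (WreathZ C)) n ∩
        (wreathBase C : Set (WreathZ C))).Infinite :=
      fun h => hfin (h.subset hsub)
    haveI := hInf.to_subtype
    rw [Nat.card_eq_zero_of_infinite]
    exact Nat.zero_le _
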